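/- For every z ∈ 𝔻, the iterates Fⁿ(z) converge to 0 as n → ∞. -/

import Mathlib

/-- The open unit disk in `ℂ`. -/
def unitDisk : Set ℂ := {z : ℂ | ‖z‖ < 1}

/-- The map `f` on the open unit disk. -/
noncomputable def mapF (z : ℂ) : ℂ :=
  if z = 0 then 0 else
    (Real.exp 1 * z / (Real.exp 1 * ‖z‖ - ‖z‖ + 1)) *
      Complex.exp (2 * Real.pi * Complex.I *
        Real.log (‖z‖ / (1 - ‖z‖)))

/-- The map `F`, the inverse of `f`, on the open unit disk. -/
noncomputable def mapFinv (w : ℂ) : ℂ :=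
  if w = 0 then 0 else
    ((Real.exp 1)⁻¹ * w / ((Real.exp 1)⁻¹ * ‖w‖ - ‖w‖ + 1)) *
      Complex.exp (-(2 * Real.pi * Complex.I *
        Real.log (‖w‖ / (1 - ‖w‖))))

lemma abs_mapFinv {w : ℂ} (hw : ‖w‖ < 1) :
    ‖mapFinv w‖
      = (Real.exp 1)⁻¹ * ‖w‖ /
        ((Real.exp 1)⁻¹ * ‖w‖ - ‖w‖ + 1) := by
  rcases eq_or_ne w 0 with h | h
  · simp [mapFinv, h]
  · have hE : 0 < (Real.exp 1)⁻¹ := by positivity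
    have h0 : 0 ≤ ‖w‖ := norm_nonneg w
    have hden : 0 < (Real.exp 1)⁻¹ * ‖w‖ - ‖w‖ + 1 := by nlinarith
    rw [mapFinv, if_neg h, norm_mul, norm_div, norm_mul]
    have hexp : ‖Complex.exp (-(2 * Real.pi * Complex.I *
        Real.log (‖w‖ / (1 - ‖w‖))))‖ = 1 := by
      rw [Complex.norm_exp]
      simp
    rw [hexp, mul_one]
    have hd : ((((Real.exp 1)⁻¹ : ℝ) : ℂ) * (‖w‖ : ℂ) - (‖w‖ : ℂ) + 1)
        = (((Real.exp 1)⁻¹ * ‖w‖ - ‖w‖ + 1 : ℝ) : ℂ) := by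
      push_cast; ring
    rw [hd, Complex.norm_real, Complex.norm_real, Real.norm_of_nonneg hden.le,
      Real.norm_of_nonneg hE.le]

lemma step_mapFinv {r₀ : ℝ} (hr : r₀ < 1) {w : ℂ} (hw : ‖w‖ ≤ r₀) :
    ‖mapFinv w‖
      ≤ ((Real.exp 1)⁻¹ / ((Real.exp 1)⁻¹ * r₀ - r₀ + 1)) * ‖w‖ := by
  have h0 : 0 ≤ ‖w‖ := norm_nonneg w
  have hE : 0 < (Real.exp 1)⁻¹ := by positivity
  have hE1 : (Real.exp 1)⁻¹ < 1 := by
    have h1e : 1 < Real.exp 1 := by have := Real.add_one_le_exp 1; linarith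
    rw [inv_lt_one_iff₀]; right; exact h1e
  have hr0 : 0 ≤ r₀ := le_trans h0 hw
  have hden0 : 0 < (Real.exp 1)⁻¹ * r₀ - r₀ + 1 := by nlinarith
  have hdenw : 0 < (Real.exp 1)⁻¹ * ‖w‖ - ‖w‖ + 1 := by nlinarith
  rw [abs_mapFinv (lt_of_le_of_lt hw hr)]
  rw [div_mul_eq_mul_div, div_le_div_iff₀ hdenw hden0]
  nlinarith [mul_nonneg (mul_nonneg (mul_nonneg hE.le h0) (sub_nonneg.mpr hw))
    (sub_nonneg.mpr hE1.le)]

/-- The iterates of `F` converge to `0` on the open unit disk. -/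
theorem stmt_14 :
    ∀ z ∈ unitDisk, Filter.Tendsto (fun n : ℕ => mapFinv^[n] z) Filter.atTop (nhds 0) := by
  intro z hz
  have hz' : ‖z‖ < 1 := hz
  set r₀ := ‖z‖ with hr₀
  set c := (Real.exp 1)⁻¹ / ((Real.exp 1)⁻¹ * r₀ - r₀ + 1) with hc
  have hE : 0 < (Real.exp 1)⁻¹ := by positivity
  have hE1 : (Real.exp 1)⁻¹ < 1 := by
    have h1e : 1 < Real.exp 1 := by have := Real.add_one_le_exp 1; linarith
    rw [inv_lt_one_iff₀]; right; exact h1e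
  have hr0 : 0 ≤ r₀ := norm_nonneg z
  have hden0 : 0 < (Real.exp 1)⁻¹ * r₀ - r₀ + 1 := by nlinarith
  have hc0 : 0 ≤ c := by positivity
  have hc1 : c < 1 := by
    rw [hc, div_lt_one hden0]; nlinarith
  have key : ∀ n : ℕ, ‖mapFinv^[n] z‖ ≤ c ^ n * r₀ := by
    intro n
    induction n with
    | zero => simp [hr₀]
    | succ n ih =>
      have hle : ‖mapFinv^[n] z‖ ≤ r₀ := by
        calc ‖mapFinv^[n] z‖ ≤ c ^ n * r₀ := ih
          _ ≤ 1 * r₀ := by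
            have : c ^ n ≤ 1 := pow_le_one₀ hc0 hc1.le
            nlinarith
          _ = r₀ := one_mul r₀
      rw [Function.iterate_succ_apply']
      calc ‖mapFinv (mapFinv^[n] z)‖ ≤ c * ‖mapFinv^[n] z‖ :=
            step_mapFinv hz' hle
        _ ≤ c * (c ^ n * r₀) := by nlinarith
        _ = c ^ (n + 1) * r₀ := by ring
  rw [tendsto_zero_iff_norm_tendsto_zero]
  have hlim : Filter.Tendsto (fun n : ℕ => c ^ n * r₀) Filter.atTop (nhds 0) := by
    have := (tendsto_pow_atTop_nhds_zero_of_lt_one hc0 hc1).mul_const r₀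
    simpa using this
  exact squeeze_zero (fun n => norm_nonneg _) (fun n => key n) hlim
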